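/- For any λ ∈ ℝ with λ ≠ 1, the sequence x₁²−λx₂x₃, x₂²−λx₁x₃, x₃²−λx₁x₂ is a regular sequence in ℝ[x₁,x₂,x₃], and hence the quotient ring ℝ[x₁,x₂,x₃]/(x₁²−λx₂x₃, x₂²−λx₁x₃, x₃²−λx₁x₂) is finite-dimensional as a real vector space. -/

import Mathlib

open MvPolynomial

noncomputable section Aux5
variable (lam : ℝ)

abbrev R3 : Type := MvPolynomial (Fin 3) ℝ

def F1 : R3 := X 0 ^ 2 - C lam * (X 1 * X 2)
def F2 : R3 := X 1 ^ 2 - C lam * (X 0 * X 2)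
def F3 : R3 := X 2 ^ 2 - C lam * (X 0 * X 1)

lemma smulreg_quot (I : Ideal R3) (r : R3) (h : ∀ g, r * g ∈ I → g ∈ I) :
    IsSMulRegular (R3 ⧸ (I • (⊤ : Submodule R3 R3))) r := by
  have hI : I • (⊤ : Submodule R3 R3) = I := by rw [smul_eq_mul, Ideal.mul_top]
  rw [hI]
  intro x y hxy
  obtain ⟨a, rfl⟩ := Submodule.Quotient.mk_surjective _ x
  obtain ⟨b, rfl⟩ := Submodule.Quotient.mk_surjective _ y
  simp only [← Submodule.Quotient.mk_smul, Submodule.Quotient.eq] at hxy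
  rw [Submodule.Quotient.eq]
  have : r * (a - b) ∈ I := by
    have : r • a - r • b = r * (a - b) := by simp [smul_eq_mul]; ring
    rwa [this] at hxy
  exact h _ this

lemma F1_ne_zero : F1 lam ≠ 0 := by
  intro h
  have := congrArg (MvPolynomial.eval ![1, 0, 0]) h
  simp [F1] at this

abbrev A2 : Type := MvPolynomial (Fin 2) ℝ

lemma key_cancel (a b : A2) (h1 : X 0 ^ 2 * b - C lam * X 1 * a = 0)
    (h0 : X 0 ^ 2 * a - C lam ^ 2 * X 0 * X 1 ^ 2 * b = 0) : a = 0 ∧ b = 0 := by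
  have hx : (X 0 : A2) ≠ 0 := by
    intro h
    have := congrArg (MvPolynomial.eval ![1, 0]) h
    simp at this
  have hb : (X 0 * (X 0 ^ 3 - C lam ^ 3 * X 1 ^ 3)) * b = 0 := by
    linear_combination X 0 ^ 2 * h1 + C lam * X 1 * h0
  have hnz : (X 0 : A2) * (X 0 ^ 3 - C lam ^ 3 * X 1 ^ 3) ≠ 0 := by
    intro h
    have := congrArg (MvPolynomial.eval ![1, 0]) h
    simp at this
  have hb0 : b = 0 := by
    rcases mul_eq_zero.mp hb with h | h
    · exact absurd h hnz
    · exact h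
  subst hb0
  refine ⟨?_, rfl⟩
  have ha : (X 0 : A2) ^ 2 * a = 0 := by linear_combination h0
  rcases mul_eq_zero.mp ha with h | h
  · exact absurd h (pow_ne_zero _ hx)
  · exact h

local notation "φ" => MvPolynomial.finSuccEquiv ℝ 2

lemma phi_C (r : ℝ) : φ (C r : R3) = Polynomial.C (C r) := by
  simp [finSuccEquiv_apply]

lemma phi_F1 : φ (F1 lam) = Polynomial.X ^ 2 - Polynomial.C (C lam * (X 0 * X 1)) := by
  have h1 : (1 : Fin 3) = Fin.succ 0 := rfl
  have h2 : (2 : Fin 3) = Fin.succ 1 := rfl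
  simp only [F1, map_sub, map_mul, map_pow, h1, h2, finSuccEquiv_X_zero, finSuccEquiv_X_succ,
    phi_C, map_mul]

lemma phi_F2 : φ (F2 lam) =
    Polynomial.C ((X 0 : A2) ^ 2) - Polynomial.C (C lam * X 1) * Polynomial.X := by
  have h1 : (1 : Fin 3) = Fin.succ 0 := rfl
  have h2 : (2 : Fin 3) = Fin.succ 1 := rfl
  simp only [F2, map_sub, map_mul, map_pow, h1, h2, finSuccEquiv_X_zero, finSuccEquiv_X_succ,
    phi_C, map_mul]
  ring

lemma L1 (g : R3) (hg : F2 lam * g ∈ Ideal.span {F1 lam}) : g ∈ Ideal.span {F1 lam} := by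
  rw [Ideal.mem_span_singleton] at hg ⊢
  -- move to Polynomial A2
  have hdvd : φ (F1 lam) ∣ φ (F2 lam) * φ g := by
    rw [← map_mul]; exact _root_.map_dvd _ hg
  set Q1 : Polynomial A2 := Polynomial.X ^ 2 - Polynomial.C (C lam * (X 0 * X 1)) with hQ1
  rw [phi_F1] at hdvd
  have hmonic : Q1.Monic := Polynomial.monic_X_pow_sub_C _ (by norm_num)
  have hdeg1 : Q1.degree = 2 := Polynomial.degree_X_pow_sub_C (by norm_num) _
  set r : Polynomial A2 := φ g %ₘ Q1 with hr
  have hsub : φ g - r = Q1 * (φ g /ₘ Q1) := by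
    have := Polynomial.modByMonic_add_div (φ g) Q1
    linear_combination -this
  have hdvdr : Q1 ∣ φ (F2 lam) * r := by
    have h2 : Q1 ∣ φ (F2 lam) * (φ g - r) := ⟨φ (F2 lam) * (φ g /ₘ Q1), by rw [hsub]; ring⟩
    have h3 := dvd_sub hdvd h2
    have heq : φ (F2 lam) * φ g - φ (F2 lam) * (φ g - r) = φ (F2 lam) * r := by ring
    rwa [heq] at h3
  have hdegr : r.degree < 2 := by rw [← hdeg1]; exact Polynomial.degree_modByMonic_lt _ hmonic
  have hdegr1 : r.degree ≤ 1 := by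
    by_cases hr0 : r = 0
    · simp [hr0]
    · rw [Polynomial.degree_eq_natDegree hr0] at hdegr ⊢
      have : r.natDegree < 2 := by exact_mod_cast hdegr
      exact_mod_cast Nat.lt_succ_iff.mp this
  obtain hrr := Polynomial.eq_X_add_C_of_degree_le_one hdegr1
  set a := r.coeff 0 with ha
  set b := r.coeff 1 with hb
  set L : Polynomial A2 := Polynomial.C (X 0 ^ 2 * a - C lam ^ 2 * X 0 * X 1 ^ 2 * b)
    + Polynomial.C (X 0 ^ 2 * b - C lam * X 1 * a) * Polynomial.X with hL
  have hiden : φ (F2 lam) * r = Q1 * (-Polynomial.C (C lam * X 1 * b)) + L := by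
    rw [phi_F2, hrr, hQ1, hL]
    simp only [map_sub, map_mul, map_pow, map_add]
    ring
  have hL0 : L = 0 := by
    have hm0 : (φ (F2 lam) * r) %ₘ Q1 = 0 := (Polynomial.modByMonic_eq_zero_iff_dvd hmonic).mpr hdvdr
    have hLdeg : L.degree < Q1.degree := by
      rw [hdeg1, hL]
      apply lt_of_le_of_lt (Polynomial.degree_add_le _ _)
      apply max_lt
      · exact lt_of_le_of_lt Polynomial.degree_C_le (by norm_num)
      · apply lt_of_le_of_lt (Polynomial.degree_mul_le _ _)
        calc (Polynomial.C (X 0 ^ 2 * b - C lam * X 1 * a)).degree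
              + (Polynomial.X : Polynomial A2).degree
            ≤ 0 + 1 := add_le_add Polynomial.degree_C_le Polynomial.degree_X_le
          _ < 2 := by norm_num
    have : (Q1 * (-Polynomial.C (C lam * X 1 * b)) + L) %ₘ Q1 = L := by
      rw [Polynomial.add_modByMonic, Polynomial.self_mul_modByMonic hmonic, zero_add,
        (Polynomial.modByMonic_eq_self_iff hmonic).mpr hLdeg]
    rw [hiden, this] at hm0
    exact hm0
  have hc1 : X 0 ^ 2 * b - C lam * X 1 * a = 0 := by
    have h1 := congrArg (fun p => Polynomial.coeff p 1) hL0
    simp only [hL, Polynomial.coeff_add, Polynomial.coeff_C_mul, Polynomial.coeff_X_one,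
      Polynomial.coeff_C, Polynomial.coeff_zero, if_neg (one_ne_zero), zero_add, mul_one] at h1
    exact h1
  have hc0 : X 0 ^ 2 * a - C lam ^ 2 * X 0 * X 1 ^ 2 * b = 0 := by
    have h1 := congrArg (fun p => Polynomial.coeff p 0) hL0
    simp only [hL, Polynomial.coeff_add, Polynomial.coeff_C_mul, Polynomial.coeff_X_zero,
      Polynomial.coeff_C, Polynomial.coeff_zero, if_pos rfl, mul_zero, add_zero] at h1
    exact h1
  obtain ⟨ha0, hb0⟩ := key_cancel lam a b hc1 hc0
  have hr0 : r = 0 := by rw [hrr, ha0, hb0]; simp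
  have hdvg : φ (F1 lam) ∣ φ g := by
    rw [phi_F1]
    rw [← hQ1]
    exact ⟨φ g /ₘ Q1, by linear_combination hsub + hr0⟩
  have := _root_.map_dvd (MvPolynomial.finSuccEquiv ℝ 2).symm hdvg
  simpa using this

def psi : Polynomial ℝ →ₐ[ℝ] R3 := Polynomial.aeval (X 2)

def Nf (a0 a1 b0 b1 : Polynomial ℝ) : R3 :=
  psi a0 + psi a1 * X 0 + psi b0 * X 1 + psi b1 * (X 0 * X 1)

lemma psi_C (r : ℝ) : psi (Polynomial.C r) = C r := by
  simp [psi, MvPolynomial.algebraMap_eq]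

lemma psi_X : psi Polynomial.X = X 2 := by simp [psi]

lemma red (g : R3) : ∃ a0 a1 b0 b1 : Polynomial ℝ,
    g - Nf a0 a1 b0 b1 ∈ Ideal.span {F1 lam, F2 lam} := by
  induction g using MvPolynomial.induction_on with
  | C r =>
      refine ⟨Polynomial.C r, 0, 0, 0, ?_⟩
      simp [Nf, psi_C]
  | add p q hp hq =>
      obtain ⟨a0, a1, b0, b1, hp⟩ := hp
      obtain ⟨c0, c1, d0, d1, hq⟩ := hq
      refine ⟨a0 + c0, a1 + c1, b0 + d0, b1 + d1, ?_⟩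
      have : p + q - Nf (a0 + c0) (a1 + c1) (b0 + d0) (b1 + d1)
          = (p - Nf a0 a1 b0 b1) + (q - Nf c0 c1 d0 d1) := by
        simp only [Nf, map_add]; ring
      rw [this]
      exact Ideal.add_mem _ hp hq
  | mul_X p i hp =>
      obtain ⟨a0, a1, b0, b1, hp⟩ := hp
      have hmem : ∀ u v : R3, u * F1 lam + v * F2 lam ∈ Ideal.span {F1 lam, F2 lam} :=
        fun u v => Ideal.mem_span_pair.mpr ⟨u, v, rfl⟩
      have hx : ∀ (n0 n1 m0 m1 : Polynomial ℝ) (u v : R3),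
          Nf a0 a1 b0 b1 * X i - Nf n0 n1 m0 m1 = u * F1 lam + v * F2 lam →
          ∃ c0 c1 d0 d1 : Polynomial ℝ,
            p * X i - Nf c0 c1 d0 d1 ∈ Ideal.span {F1 lam, F2 lam} := by
        intro n0 n1 m0 m1 u v hid
        refine ⟨n0, n1, m0, m1, ?_⟩
        have : p * X i - Nf n0 n1 m0 m1
            = (p - Nf a0 a1 b0 b1) * X i + (Nf a0 a1 b0 b1 * X i - Nf n0 n1 m0 m1) := by ring
        rw [this, hid]
        exact Ideal.add_mem _ (Ideal.mul_mem_right _ _ hp) (hmem u v)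
      rcases (by decide : ∀ j : Fin 3, j = 0 ∨ j = 1 ∨ j = 2) i with rfl | rfl | rfl
      · refine hx 0 (a0 + Polynomial.C lam ^ 2 * Polynomial.X ^ 2 * b1)
          (Polynomial.C lam * Polynomial.X * a1) b0
          (psi a1 + psi b1 * X 1) (C lam * psi b1 * X 2) ?_
        simp only [Nf, F1, F2, map_add, map_mul, map_pow, map_zero, psi_C, psi_X]
        ring
      · refine hx 0 (Polynomial.C lam * Polynomial.X * b0)
          (a0 + Polynomial.C lam ^ 2 * Polynomial.X ^ 2 * b1) a1
          (C lam * psi b1 * X 2) (psi b0 + psi b1 * X 0) ?_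
        simp only [Nf, F1, F2, map_add, map_mul, map_pow, map_zero, psi_C, psi_X]
        ring
      · refine hx (Polynomial.X * a0) (Polynomial.X * a1) (Polynomial.X * b0)
          (Polynomial.X * b1) 0 0 ?_
        simp only [Nf, F1, F2, map_add, map_mul, map_pow, map_zero, psi_C, psi_X]
        ring

abbrev DB : Type := DualNumber (DualNumber (Polynomial ℝ))

set_option synthInstance.maxHeartbeats 1000000 in
instance : CommRing DB := inferInstance

set_option synthInstance.maxHeartbeats 1000000 in
instance : Algebra ℝ DB := inferInstance

set_option maxHeartbeats 1000000
set_option synthInstance.maxHeartbeats 1000000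

open TrivSqZeroExt in
lemma uniq0 (a0 a1 b0 b1 : Polynomial ℝ)
    (h : Nf a0 a1 b0 b1 ∈ Ideal.span {F1 0, F2 0}) :
    a0 = 0 ∧ a1 = 0 ∧ b0 = 0 ∧ b1 = 0 := by
  obtain ⟨u, v, huv⟩ := Ideal.mem_span_pair.mp h
  set j : Polynomial ℝ →ₐ[ℝ] DB :=
    (inlAlgHom ℝ _ _).comp (inlAlgHom ℝ (Polynomial ℝ) (Polynomial ℝ)) with hj
  set Φ : R3 →ₐ[ℝ] DB := MvPolynomial.aeval
    (fun i : Fin 3 => if i = 0 then (DualNumber.eps : DB)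
      else if i = 1 then inl DualNumber.eps else inl (inl Polynomial.X)) with hΦ
  have hψ : ∀ a : Polynomial ℝ, Φ (psi a) = inl (inl a) := by
    intro a
    have : Φ.comp psi = j := by
      apply Polynomial.algHom_ext
      simp [hj, hΦ, psi]
    have := congrArg (fun f => f a) this
    simpa [hj] using this
  have hF1 : Φ (F1 0) = 0 := by
    simp [F1, hΦ, sq, DualNumber.eps_mul_eps]
  have hF2 : Φ (F2 0) = 0 := by
    simp [F2, hΦ, sq, TrivSqZeroExt.inl_mul_inl, DualNumber.eps_mul_eps]
  have hNf : Φ (Nf a0 a1 b0 b1) = 0 := by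
    rw [← huv, map_add, map_mul, map_mul, hF1, hF2, mul_zero, mul_zero, add_zero]
  rw [Nf, map_add, map_add, map_add, map_mul, map_mul, map_mul, map_mul] at hNf
  simp only [hψ] at hNf
  have hx0 : Φ (X 0) = DualNumber.eps := by simp [hΦ]
  have hx1 : Φ (X 1) = inl DualNumber.eps := by simp [hΦ]
  rw [hx0, hx1] at hNf
  constructor
  · have := congrArg (fun x : DB => fst (fst x)) hNf
    simpa [fst_mul, snd_mul] using this
  constructor
  · have := congrArg (fun x : DB => fst (snd x)) hNf
    simpa [fst_mul, snd_mul] using this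
  constructor
  · have := congrArg (fun x : DB => snd (fst x)) hNf
    simpa [fst_mul, snd_mul] using this
  · have := congrArg (fun x : DB => snd (snd x)) hNf
    simpa [fst_mul, snd_mul] using this

def muC : Polynomial ℝ →ₐ[ℝ] Polynomial ℂ := Polynomial.mapAlgHom (Algebra.ofId ℝ ℂ)

lemma muC_inj : Function.Injective muC := by
  have : Function.Injective (Algebra.ofId ℝ ℂ) := (algebraMap ℝ ℂ).injective
  intro a b hab
  exact Polynomial.map_injective _ this hab

lemma muC_X : muC Polynomial.X = Polynomial.X := by simp [muC]

lemma Ehelp (a0 a1 b0 b1 : Polynomial ℝ) (w : ℂ) (hw : w ^ 3 = 1)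
    (hmem' : Nf a0 a1 b0 b1 ∈ Ideal.span {F1 lam, F2 lam}) :
    muC a0 + Polynomial.C (lam : ℂ) * Polynomial.C w * Polynomial.X * muC a1
      + Polynomial.C (lam : ℂ) * Polynomial.C w ^ 2 * Polynomial.X * muC b0
      + Polynomial.C (lam : ℂ) ^ 2 * Polynomial.X ^ 2 * muC b1 = 0 := by
  obtain ⟨u, v, huv⟩ := Ideal.mem_span_pair.mp hmem'
  have hwC : (Polynomial.C w : Polynomial ℂ) ^ 3 = 1 := by
    rw [← map_pow, hw, map_one]
  set Φ : R3 →ₐ[ℝ] Polynomial ℂ := MvPolynomial.aeval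
    (fun i : Fin 3 => if i = 0 then Polynomial.C ((lam : ℂ) * w) * Polynomial.X
      else if i = 1 then Polynomial.C ((lam : ℂ) * w ^ 2) * Polynomial.X
      else Polynomial.X) with hΦ
  have hψ : ∀ a : Polynomial ℝ, Φ (psi a) = muC a := by
    intro a
    have : Φ.comp psi = muC := by
      apply Polynomial.algHom_ext
      simp [hΦ, psi, muC]
    exact congrArg (fun f => f a) this
  have halg : ∀ r : ℝ, Φ (C r) = Polynomial.C (r : ℂ) := by
    intro r
    rw [hΦ, MvPolynomial.aeval_C]
    rfl
  have hx0 : Φ (X 0) = Polynomial.C ((lam : ℂ) * w) * Polynomial.X := by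
    rw [hΦ]; simp only [MvPolynomial.aeval_X, if_pos rfl, if_true]
  have hx1 : Φ (X 1) = Polynomial.C ((lam : ℂ) * w ^ 2) * Polynomial.X := by
    rw [hΦ]; simp only [MvPolynomial.aeval_X,
      if_neg (by decide : ¬(1 : Fin 3) = 0), if_pos rfl, if_true]
  have hx2 : Φ (X 2) = Polynomial.X := by
    rw [hΦ]; simp only [MvPolynomial.aeval_X,
      if_neg (by decide : ¬(2 : Fin 3) = 0), if_neg (by decide : ¬(2 : Fin 3) = 1)]
  have hF1 : Φ (F1 lam) = 0 := by
    rw [F1, map_sub, map_pow, map_mul, map_mul, halg, hx0, hx1, hx2]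
    simp only [map_mul, map_pow]
    ring
  have hF2 : Φ (F2 lam) = 0 := by
    rw [F2, map_sub, map_pow, map_mul, map_mul, halg, hx0, hx1, hx2]
    simp only [map_mul, map_pow]
    linear_combination (Polynomial.C (lam:ℂ) ^ 2 * Polynomial.C w * Polynomial.X ^ 2) * hwC
  have hNf : Φ (Nf a0 a1 b0 b1) = 0 := by
    rw [← huv, map_add, map_mul, map_mul, hF1, hF2, mul_zero, mul_zero, add_zero]
  rw [Nf, map_add, map_add, map_add, map_mul, map_mul, map_mul, map_mul] at hNf
  simp only [hψ, hx0, hx1] at hNf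
  simp only [map_mul, map_pow] at hNf
  linear_combination hNf - (Polynomial.C (lam : ℂ) ^ 2 * Polynomial.X ^ 2 * muC b1) * hwC

lemma Einf (a0 a1 b0 b1 : Polynomial ℝ)
    (hmem' : Nf a0 a1 b0 b1 ∈ Ideal.span {F1 lam, F2 lam}) : a0 = 0 := by
  obtain ⟨u, v, huv⟩ := Ideal.mem_span_pair.mp hmem'
  set Φ : R3 →ₐ[ℝ] Polynomial ℝ := MvPolynomial.aeval
    (fun i : Fin 3 => if i = 2 then Polynomial.X else 0) with hΦ
  have hψ : ∀ a : Polynomial ℝ, Φ (psi a) = a := by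
    intro a
    have : Φ.comp psi = AlgHom.id ℝ (Polynomial ℝ) := by
      apply Polynomial.algHom_ext
      simp [hΦ, psi]
    exact congrArg (fun f => f a) this
  have hx0 : Φ (X 0) = 0 := by
    rw [hΦ]; simp only [MvPolynomial.aeval_X, if_neg (by decide : ¬(0 : Fin 3) = 2)]
  have hx1 : Φ (X 1) = 0 := by
    rw [hΦ]; simp only [MvPolynomial.aeval_X, if_neg (by decide : ¬(1 : Fin 3) = 2)]
  have hF1 : Φ (F1 lam) = 0 := by
    rw [F1, map_sub, map_pow, map_mul, map_mul, hx0, hx1]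
    ring
  have hF2 : Φ (F2 lam) = 0 := by
    rw [F2, map_sub, map_pow, map_mul, map_mul, hx0, hx1]
    ring
  have hNf : Φ (Nf a0 a1 b0 b1) = 0 := by
    rw [← huv, map_add, map_mul, map_mul, hF1, hF2, mul_zero, mul_zero, add_zero]
  rw [Nf, map_add, map_add, map_add, map_mul, map_mul, map_mul, map_mul] at hNf
  simp only [hψ, hx0, hx1, mul_zero, add_zero, zero_mul] at hNf
  exact hNf

lemma uniq (hlam : lam ≠ 1) (a0 a1 b0 b1 : Polynomial ℝ)
    (h : Nf a0 a1 b0 b1 ∈ Ideal.span {F1 lam, F2 lam}) :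
    a0 = 0 ∧ a1 = 0 ∧ b0 = 0 ∧ b1 = 0 := by
  rcases eq_or_ne lam 0 with rfl | hlam0
  · exact uniq0 a0 a1 b0 b1 h
  -- complex cube root of unity
  set ω : ℂ := (-1 + Real.sqrt 3 * Complex.I) / 2 with hω
  have h3 : ((Real.sqrt 3 : ℝ) : ℂ) ^ 2 = 3 := by
    norm_cast
    rw [Real.sq_sqrt]; norm_num
  have hωsum : ω ^ 2 + ω + 1 = 0 := by
    rw [hω]
    linear_combination (((Real.sqrt 3 : ℝ) : ℂ) ^ 2 / 4) * Complex.I_sq - (1 / 4) * h3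
  have hω3 : ω ^ 3 = 1 := by linear_combination (ω - 1) * hωsum
  have hωC : (Polynomial.C ω : Polynomial ℂ) ^ 2 + Polynomial.C ω + 1 = 0 := by
    rw [← map_pow, ← map_add, ← map_one (Polynomial.C (R := ℂ)), ← map_add, hωsum, map_zero]
  have hωne : ω - ω ^ 2 ≠ 0 := by
    intro hcon
    have h2 : (ω - ω ^ 2) ^ 2 = -3 := by linear_combination hωsum + (ω - 2) * hω3
    rw [hcon] at h2
    norm_num at h2
  have hl : (lam : ℂ) ≠ 0 := by exact_mod_cast hlam0
  have hCl : (Polynomial.C (lam : ℂ) : Polynomial ℂ) ≠ 0 := Polynomial.C_ne_zero.mpr hl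
  have hX : (Polynomial.X : Polynomial ℂ) ≠ 0 := Polynomial.X_ne_zero
  have ha0 : a0 = 0 := Einf lam a0 a1 b0 b1 h
  have E1 := Ehelp lam a0 a1 b0 b1 1 (one_pow 3) h
  have E2 := Ehelp lam a0 a1 b0 b1 ω hω3 h
  have hω23 : (ω ^ 2) ^ 3 = 1 := by
    rw [show (ω ^ 2) ^ 3 = (ω ^ 3) ^ 2 by ring, hω3, one_pow]
  have E3 := Ehelp lam a0 a1 b0 b1 (ω ^ 2) hω23 h
  rw [ha0, map_zero] at E1 E2 E3
  simp only [map_one, map_pow, one_pow, mul_one, zero_add] at E1 E2 E3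
  -- b1 = 0
  have hb1' : (3 : Polynomial ℂ) * Polynomial.C (lam : ℂ) ^ 2 * Polynomial.X ^ 2 * muC b1
      = 0 := by
    linear_combination E1 + E2 + E3 - (Polynomial.C (lam : ℂ) * Polynomial.X * muC a1) * hωC
      - (Polynomial.C (lam : ℂ) * Polynomial.X * muC b0)
        * ((Polynomial.C ω) ^ 2 - Polynomial.C ω + 1) * hωC
  have hb1 : b1 = 0 := by
    have hne : (3 : Polynomial ℂ) * Polynomial.C (lam : ℂ) ^ 2 * Polynomial.X ^ 2 ≠ 0 := by
      apply mul_ne_zero (mul_ne_zero _ (pow_ne_zero _ hCl)) (pow_ne_zero _ hX)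
      exact_mod_cast (by norm_num : (3 : Polynomial ℂ) ≠ 0)
    have := (mul_eq_zero.mp (by linear_combination hb1' :
      ((3 : Polynomial ℂ) * Polynomial.C (lam : ℂ) ^ 2 * Polynomial.X ^ 2) * muC b1 = 0)).resolve_left hne
    exact muC_inj (by simpa using this)
  rw [hb1, map_zero] at E1 E2
  simp only [mul_zero, add_zero] at E1 E2
  -- a1 + b0 = 0
  have hsum : muC a1 + muC b0 = 0 := by
    have h0 : Polynomial.C (lam : ℂ) * Polynomial.X * (muC a1 + muC b0) = 0 := by
      linear_combination E1
    exact (mul_eq_zero.mp h0).resolve_left (mul_ne_zero hCl hX)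
  have ha1 : a1 = 0 := by
    have h0 : Polynomial.C (lam : ℂ) * Polynomial.X * Polynomial.C (ω - ω ^ 2) * muC a1 = 0 := by
      have hb0 : muC b0 = -muC a1 := by linear_combination hsum
      rw [map_sub, map_pow]
      linear_combination E2 - Polynomial.C (lam : ℂ) * Polynomial.X * (Polynomial.C ω) ^ 2 * hb0
    have hne : Polynomial.C (lam : ℂ) * Polynomial.X * Polynomial.C (ω - ω ^ 2) ≠ 0 :=
      mul_ne_zero (mul_ne_zero hCl hX) (Polynomial.C_ne_zero.mpr hωne)
    have := (mul_eq_zero.mp h0).resolve_left hne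
    exact muC_inj (by simpa using this)
  have hb0 : b0 = 0 := by
    rw [ha1, map_zero, zero_add] at hsum
    exact muC_inj (by simpa using hsum)
  exact ⟨ha0, ha1, hb0, hb1⟩

lemma lam3_ne (hlam : lam ≠ 1) : (1 : ℝ) - lam ^ 3 ≠ 0 := by
  intro h
  have hfact : (lam - 1) * (lam ^ 2 + lam + 1) = 0 := by linear_combination -h
  have hpos : lam ^ 2 + lam + 1 > 0 := by nlinarith [sq_nonneg (2 * lam + 1)]
  rcases mul_eq_zero.mp hfact with h1 | h2
  · exact hlam (by linarith)
  · linarith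

lemma L2 (hlam : lam ≠ 1) (g : R3) (hg : F3 lam * g ∈ Ideal.span {F1 lam, F2 lam}) :
    g ∈ Ideal.span {F1 lam, F2 lam} := by
  obtain ⟨a0, a1, b0, b1, hred⟩ := red lam g
  set t : Polynomial ℝ := Polynomial.X with ht
  set cl : Polynomial ℝ := Polynomial.C lam with hcl
  set n0 : Polynomial ℝ := t ^ 2 * a0 with hn0
  set n1 : Polynomial ℝ := (1 - cl ^ 3) * t ^ 2 * a1 with hn1
  set m0 : Polynomial ℝ := (1 - cl ^ 3) * t ^ 2 * b0 with hm0
  set m1 : Polynomial ℝ := (1 - cl ^ 3) * t ^ 2 * b1 - cl * a0 with hm1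
  have hFN : F3 lam * Nf a0 a1 b0 b1 - Nf n0 n1 m0 m1 =
      (- C lam * psi a1 * X 1 - C lam ^ 2 * psi b0 * X 2
        - C lam ^ 2 * psi b1 * (X 0 * X 2)) * F1 lam
      + (- C lam ^ 2 * psi a1 * X 2 - C lam * psi b0 * X 0
        - C lam * psi b1 * X 0 ^ 2) * F2 lam := by
    rw [hn0, hn1, hm0, hm1, ht, hcl]
    simp only [Nf, F1, F2, F3, map_add, map_sub, map_mul, map_pow, map_one, psi_C, psi_X]
    ring
  have hN3 : F3 lam * Nf a0 a1 b0 b1 ∈ Ideal.span {F1 lam, F2 lam} := by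
    have : F3 lam * Nf a0 a1 b0 b1 = F3 lam * g - F3 lam * (g - Nf a0 a1 b0 b1) := by ring
    rw [this]
    exact Ideal.sub_mem _ hg (Ideal.mul_mem_left _ _ hred)
  have hNmem : Nf n0 n1 m0 m1 ∈ Ideal.span {F1 lam, F2 lam} := by
    have : Nf n0 n1 m0 m1 = F3 lam * Nf a0 a1 b0 b1
        - ((- C lam * psi a1 * X 1 - C lam ^ 2 * psi b0 * X 2
        - C lam ^ 2 * psi b1 * (X 0 * X 2)) * F1 lam
      + (- C lam ^ 2 * psi a1 * X 2 - C lam * psi b0 * X 0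
        - C lam * psi b1 * X 0 ^ 2) * F2 lam) := by
      rw [← hFN]; ring
    rw [this]
    exact Ideal.sub_mem _ hN3 (Ideal.add_mem _
      (Ideal.mul_mem_left _ _ (Ideal.subset_span (by simp)))
      (Ideal.mul_mem_left _ _ (Ideal.subset_span (by simp))))
  obtain ⟨e0, e1, f0, f1'⟩ := uniq lam hlam n0 n1 m0 m1 hNmem
  have hu : (1 - cl ^ 3 : Polynomial ℝ) * t ^ 2 ≠ 0 := by
    apply mul_ne_zero
    · rw [hcl, ← map_pow, ← map_one (Polynomial.C (R := ℝ)), ← map_sub]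
      exact Polynomial.C_ne_zero.mpr (lam3_ne lam hlam)
    · exact pow_ne_zero _ Polynomial.X_ne_zero
  have ha0 : a0 = 0 := by
    rw [hn0] at e0
    rcases mul_eq_zero.mp e0 with h | h
    · exact absurd h (pow_ne_zero _ Polynomial.X_ne_zero)
    · exact h
  have ha1 : a1 = 0 := by
    rw [hn1] at e1
    exact (mul_eq_zero.mp e1).resolve_left hu
  have hb0 : b0 = 0 := by
    rw [hm0] at f0
    exact (mul_eq_zero.mp f0).resolve_left hu
  have hb1 : b1 = 0 := by
    rw [hm1, ha0, mul_zero, sub_zero] at f1'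
    exact (mul_eq_zero.mp f1').resolve_left hu
  have hNzero : Nf a0 a1 b0 b1 = 0 := by
    rw [ha0, ha1, hb0, hb1]
    simp [Nf]
  rw [hNzero, sub_zero] at hred
  exact hred

lemma Cmul_mem {J : Ideal R3} {c : ℝ} (hc : c ≠ 0) {p : R3} (h : C c * p ∈ J) : p ∈ J := by
  have : p = C c⁻¹ * (C c * p) := by
    rw [← mul_assoc, ← map_mul, inv_mul_cancel₀ hc, map_one, one_mul]
  rw [this]
  exact Ideal.mul_mem_left _ _ h

def Jlam : Ideal R3 := Ideal.span {F1 lam, F2 lam, F3 lam}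

lemma F1_memJ : F1 lam ∈ Jlam lam := Ideal.subset_span (by simp)
lemma F2_memJ : F2 lam ∈ Jlam lam := Ideal.subset_span (by simp)
lemma F3_memJ : F3 lam ∈ Jlam lam := Ideal.subset_span (by simp)

lemma sq_mul_mem (hlam : lam ≠ 1) :
    (X 0 ^ 2 * X 1 ∈ Jlam lam) ∧ (X 0 ^ 2 * X 2 ∈ Jlam lam) ∧
    (X 1 ^ 2 * X 0 ∈ Jlam lam) ∧ (X 1 ^ 2 * X 2 ∈ Jlam lam) ∧
    (X 2 ^ 2 * X 0 ∈ Jlam lam) ∧ (X 2 ^ 2 * X 1 ∈ Jlam lam) := by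
  have hu := lam3_ne lam hlam
  have key : ∀ p u1 u2 u3 : R3, C (1 - lam ^ 3) * p
      = u1 * F1 lam + u2 * F2 lam + u3 * F3 lam → p ∈ Jlam lam := by
    intro p u1 u2 u3 hid
    apply Cmul_mem hu
    rw [hid]
    exact Ideal.add_mem _ (Ideal.add_mem _
      (Ideal.mul_mem_left _ _ (F1_memJ lam)) (Ideal.mul_mem_left _ _ (F2_memJ lam)))
      (Ideal.mul_mem_left _ _ (F3_memJ lam))
  refine ⟨key _ (X 1) (C lam * X 2) (C lam ^ 2 * X 0) ?_,
    key _ (X 2) (C lam ^ 2 * X 0) (C lam * X 1) ?_,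
    key _ (C lam * X 2) (X 0) (C lam ^ 2 * X 1) ?_,
    key _ (C lam ^ 2 * X 1) (X 2) (C lam * X 0) ?_,
    key _ (C lam * X 1) (C lam ^ 2 * X 2) (X 0) ?_,
    key _ (C lam ^ 2 * X 2) (C lam * X 0) (X 1) ?_⟩ <;>
  · simp only [F1, F2, F3, map_sub, map_pow, map_one]
    ring

def Sgen : Set R3 := {1, X 0, X 1, X 2, X 0 * X 1, X 0 * X 2, X 1 * X 2, X 0 * (X 1 * X 2)}

def SP : Submodule ℝ R3 :=
  Submodule.span ℝ (Sgen) ⊔ (Jlam lam).restrictScalars ℝ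

lemma mem_SP_of_span {p : R3} (h : p ∈ Submodule.span ℝ (Sgen)) : p ∈ SP lam :=
  Submodule.mem_sup_left h

lemma mem_SP_of_J {p : R3} (h : p ∈ Jlam lam) : p ∈ SP lam :=
  Submodule.mem_sup_right h

lemma gen_mem (p : R3) (hp : p ∈ Sgen) : p ∈ SP lam :=
  mem_SP_of_span lam (Submodule.subset_span hp)

lemma mulX_mem (hlam : lam ≠ 1) (i : Fin 3) (v : R3) (hv : v ∈ SP lam) :
    X i * v ∈ SP lam := by
  obtain ⟨h01, h02, h10, h12, h20, h21⟩ := sq_mul_mem lam hlam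
  rw [SP, Submodule.mem_sup] at hv
  obtain ⟨y, hy, z, hz, rfl⟩ := hv
  rw [mul_add]
  refine Submodule.add_mem _ ?_ (mem_SP_of_J lam (Ideal.mul_mem_left _ _ hz))
  induction hy using Submodule.span_induction with
  | mem s hs =>
      have hsq : ∀ j : Fin 3, X j * X j ∈ SP lam := by
        intro j
        have hgen : ∀ F q : R3, F ∈ Jlam lam → q ∈ Submodule.span ℝ Sgen →
            X j * X j = F + lam • q → X j * X j ∈ SP lam := by
          intro F q hF hq hid
          rw [hid]
          exact Submodule.add_mem _ (mem_SP_of_J lam hF)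
            (mem_SP_of_span lam (Submodule.smul_mem _ _ hq))
        rcases (by decide : ∀ k : Fin 3, k = 0 ∨ k = 1 ∨ k = 2) j with rfl | rfl | rfl
        · exact hgen (F1 lam) (X 1 * X 2) (F1_memJ lam) (Submodule.subset_span (by simp [Sgen]))
            (by rw [MvPolynomial.smul_eq_C_mul, F1]; ring)
        · exact hgen (F2 lam) (X 0 * X 2) (F2_memJ lam) (Submodule.subset_span (by simp [Sgen]))
            (by rw [MvPolynomial.smul_eq_C_mul, F2]; ring)
        · exact hgen (F3 lam) (X 0 * X 1) (F3_memJ lam) (Submodule.subset_span (by simp [Sgen]))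
            (by rw [MvPolynomial.smul_eq_C_mul, F3]; ring)
      simp only [Sgen, Set.mem_insert_iff, Set.mem_singleton_iff] at hs
      rcases (by decide : ∀ k : Fin 3, k = 0 ∨ k = 1 ∨ k = 2) i with rfl | rfl | rfl <;>
        rcases hs with rfl | rfl | rfl | rfl | rfl | rfl | rfl | rfl
      -- i = 0
      · exact gen_mem lam _ (by simp [Sgen])
      · exact hsq 0
      · exact gen_mem lam _ (by simp [Sgen])
      · exact gen_mem lam _ (by simp [Sgen])
      · rw [show (X 0 * (X 0 * X 1) : R3) = X 0 ^ 2 * X 1 by ring]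
        exact mem_SP_of_J lam h01
      · rw [show (X 0 * (X 0 * X 2) : R3) = X 0 ^ 2 * X 2 by ring]
        exact mem_SP_of_J lam h02
      · exact gen_mem lam _ (by simp [Sgen])
      · rw [show (X 0 * (X 0 * (X 1 * X 2)) : R3) = X 2 * (X 0 ^ 2 * X 1) by ring]
        exact mem_SP_of_J lam (Ideal.mul_mem_left _ _ h01)
      -- i = 1
      · exact gen_mem lam _ (by simp [Sgen])
      · rw [show (X 1 * X 0 : R3) = X 0 * X 1 by ring]
        exact gen_mem lam _ (by simp [Sgen])
      · exact hsq 1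
      · exact gen_mem lam _ (by simp [Sgen])
      · rw [show (X 1 * (X 0 * X 1) : R3) = X 1 ^ 2 * X 0 by ring]
        exact mem_SP_of_J lam h10
      · rw [show (X 1 * (X 0 * X 2) : R3) = X 0 * (X 1 * X 2) by ring]
        exact gen_mem lam _ (by simp [Sgen])
      · rw [show (X 1 * (X 1 * X 2) : R3) = X 1 ^ 2 * X 2 by ring]
        exact mem_SP_of_J lam h12
      · rw [show (X 1 * (X 0 * (X 1 * X 2)) : R3) = X 2 * (X 1 ^ 2 * X 0) by ring]
        exact mem_SP_of_J lam (Ideal.mul_mem_left _ _ h10)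
      -- i = 2
      · exact gen_mem lam _ (by simp [Sgen])
      · rw [show (X 2 * X 0 : R3) = X 0 * X 2 by ring]
        exact gen_mem lam _ (by simp [Sgen])
      · rw [show (X 2 * X 1 : R3) = X 1 * X 2 by ring]
        exact gen_mem lam _ (by simp [Sgen])
      · exact hsq 2
      · rw [show (X 2 * (X 0 * X 1) : R3) = X 0 * (X 1 * X 2) by ring]
        exact gen_mem lam _ (by simp [Sgen])
      · rw [show (X 2 * (X 0 * X 2) : R3) = X 2 ^ 2 * X 0 by ring]
        exact mem_SP_of_J lam h20
      · rw [show (X 2 * (X 1 * X 2) : R3) = X 2 ^ 2 * X 1 by ring]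
        exact mem_SP_of_J lam h21
      · rw [show (X 2 * (X 0 * (X 1 * X 2)) : R3) = X 1 * (X 2 ^ 2 * X 0) by ring]
        exact mem_SP_of_J lam (Ideal.mul_mem_left _ _ h20)
  | zero => simpa using Submodule.zero_mem (SP lam)
  | add p q hp hq ihp ihq =>
      rw [mul_add]
      exact Submodule.add_mem _ ihp ihq
  | smul c p hp ihp =>
      rw [mul_smul_comm]
      exact Submodule.smul_mem _ _ ihp

lemma SP_top (hlam : lam ≠ 1) : SP lam = ⊤ := by
  rw [eq_top_iff]
  rintro g -
  induction g using MvPolynomial.induction_on with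
  | C r =>
      have : (C r : R3) = r • 1 := by rw [MvPolynomial.smul_eq_C_mul, mul_one]
      rw [this]
      exact Submodule.smul_mem _ _ (gen_mem lam _ (by simp [Sgen]))
  | add p q hp hq => exact Submodule.add_mem _ hp hq
  | mul_X p i hp =>
      rw [mul_comm]
      exact mulX_mem lam hlam i p hp

lemma findim (hlam : lam ≠ 1) : FiniteDimensional ℝ (R3 ⧸ Jlam lam) := by
  rw [FiniteDimensional]
  rw [Module.finite_def, Submodule.fg_def]
  set π : R3 →ₗ[ℝ] R3 ⧸ Jlam lam := (Ideal.Quotient.mkₐ ℝ (Jlam lam)).toLinearMap with hπ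
  refine ⟨π '' Sgen, Set.Finite.image _ ?_, ?_⟩
  · rw [Sgen]
    apply Set.Finite.insert; apply Set.Finite.insert; apply Set.Finite.insert
    apply Set.Finite.insert; apply Set.Finite.insert; apply Set.Finite.insert
    apply Set.Finite.insert; exact Set.finite_singleton _
  · rw [← Submodule.map_span]
    have hsur : Function.Surjective π := Ideal.Quotient.mkₐ_surjective ℝ _
    have htop : Submodule.map π (SP lam) = ⊤ := by
      rw [SP_top lam hlam, Submodule.map_top, LinearMap.range_eq_top]
      exact hsur
    rw [SP, Submodule.map_sup] at htop
    have hJ : Submodule.map π ((Jlam lam).restrictScalars ℝ) = ⊥ := by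
      rw [eq_bot_iff]
      rintro x ⟨y, hy, rfl⟩
      simp only [Submodule.mem_bot]
      rw [hπ]
      simpa using (Ideal.Quotient.eq_zero_iff_mem).mpr hy
    rw [hJ, sup_bot_eq] at htop
    exact htop

lemma M0 (g : R3) (hg : F1 lam * g ∈ (⊥ : Ideal R3)) : g ∈ (⊥ : Ideal R3) := by
  rw [Ideal.mem_bot] at hg ⊢
  rcases mul_eq_zero.mp hg with h | h
  · exact absurd h (F1_ne_zero lam)
  · exact h

end Aux5

theorem stmt_5 (lam : ℝ) (hlam : lam ≠ 1) :
    RingTheory.Sequence.IsWeaklyRegular (MvPolynomial (Fin 3) ℝ)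
      [(X 0 : MvPolynomial (Fin 3) ℝ) ^ 2 - C lam * (X 1 * X 2),
        X 1 ^ 2 - C lam * (X 0 * X 2), X 2 ^ 2 - C lam * (X 0 * X 1)] ∧
    FiniteDimensional ℝ (MvPolynomial (Fin 3) ℝ ⧸
      (Ideal.span {(X 0 : MvPolynomial (Fin 3) ℝ) ^ 2 - C lam * (X 1 * X 2),
        X 1 ^ 2 - C lam * (X 0 * X 2), X 2 ^ 2 - C lam * (X 0 * X 1)})) := by
  constructor
  · constructor
    intro i hi
    simp only [List.length_cons, List.length_nil] at hi
    interval_cases i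
    · apply smulreg_quot
      intro g hg
      simp only [List.take_zero, Ideal.ofList_nil] at hg ⊢
      exact M0 lam g hg
    · apply smulreg_quot
      intro g hg
      have e1 : ∀ (a b c : R3), List.take 1 [a, b, c] = [a] := fun _ _ _ => rfl
      simp only [e1, Ideal.ofList_cons, Ideal.ofList_nil, sup_bot_eq,
        List.getElem_cons_succ, List.getElem_cons_zero] at hg ⊢
      exact L1 lam g hg
    · apply smulreg_quot
      intro g hg
      have e2 : ∀ (a b c : R3), List.take 2 [a, b, c] = [a, b] := fun _ _ _ => rfl
      simp only [e2, Ideal.ofList_cons, Ideal.ofList_nil, sup_bot_eq,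
        List.getElem_cons_succ, List.getElem_cons_zero] at hg ⊢
      have hsp : Ideal.span {(X 0 : R3) ^ 2 - C lam * (X 1 * X 2)}
            ⊔ Ideal.span {(X 1 : R3) ^ 2 - C lam * (X 0 * X 2)}
          = Ideal.span {F1 lam, F2 lam} := by
        rw [← Ideal.span_union, Set.singleton_union]
        rfl
      rw [hsp] at hg ⊢
      exact L2 lam hlam g hg
  · exact findim lam hlam
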